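/- Let G_1 = (V_1,E_1) and G_2 = (V_2,E_2) be finite simple graphs with positive integer edge lengths whose vertex sets satisfy V_1 ∩ V_2 = {u}, let s ∈ V_1∖{u} and t ∈ V_2∖{u}, and let G = (V_1 ∪ V_2, E_1 ∪ E_2) be their union (the serial composition of G_1 and G_2 at u). Then for every x ∈ ℕ: c_{s,t}(G,x) = min over x' ∈ {0,1,…,x} of ( c_{s,u}(G_1,x') + c_{u,t}(G_2,x−x') ). -/

import Mathlib

/-- The minimum `τ`-length of an `ab`-path in `G` (equivalently, the infimum of
the `τ`-lengths of all `ab`-walks, since lengths are nonnegative), interpreted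
as `+∞` when `a` and `b` are disconnected. -/
noncomputable def wdist {V : Type*} (G : SimpleGraph V) (τ : Sym2 V → ℕ)
    (a b : V) : ℕ∞ :=
  ⨅ p : G.Walk a b, ((p.edges.map τ).sum : ℕ∞)

/-- `cutCost G τ a b x` is the minimum cardinality of an edge set
`S ⊆ E(G)` such that `dist^τ_{G−S}(a,b) ≥ x` (this minimum exists since
deleting all edges yields distance `+∞`). -/
noncomputable def cutCost {V : Type*} (G : SimpleGraph V) (τ : Sym2 V → ℕ)
    (a b : V) (x : ℕ) : ℕ :=
  sInf {c : ℕ | ∃ S : Finset (Sym2 V), ↑S ⊆ G.edgeSet ∧ S.card = c ∧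
    (x : ℕ∞) ≤ wdist (G.deleteEdges ↑S) τ a b}

open SimpleGraph

lemma wdist_le {V : Type*} (G : SimpleGraph V) (τ : Sym2 V → ℕ) {a b : V}
    (p : G.Walk a b) : wdist G τ a b ≤ ((p.edges.map τ).sum : ℕ∞) :=
  iInf_le _ p

lemma wdist_self_le {V : Type*} (G : SimpleGraph V) (τ : Sym2 V → ℕ) (a : V) :
    wdist G τ a a ≤ 0 := by
  simpa using wdist_le G τ (Walk.nil : G.Walk a a)

lemma wdist_attained {V : Type*} (G : SimpleGraph V) (τ : Sym2 V → ℕ) {a b : V}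
    (h : wdist G τ a b ≠ ⊤) :
    ∃ p : G.Walk a b, ((p.edges.map τ).sum : ℕ∞) = wdist G τ a b := by
  obtain ⟨d, hd⟩ := WithTop.ne_top_iff_exists.mp h
  have hlt : wdist G τ a b < (d : ℕ∞) + 1 := by
    rw [← hd]
    have : ((d:ℕ∞)) < ((d+1:ℕ):ℕ∞) := by exact_mod_cast Nat.lt_succ_self d
    exact this
  obtain ⟨p, hp⟩ := iInf_lt_iff.mp hlt
  refine ⟨p, le_antisymm ?_ (wdist_le G τ p)⟩
  rw [← hd]
  have h2 : ((p.edges.map τ).sum : ℕ∞) < ((d + 1 : ℕ) : ℕ∞) := by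
    rw [Nat.cast_add, Nat.cast_one]; exact hp
  have h3 : (p.edges.map τ).sum < d + 1 := by exact_mod_cast h2
  exact Nat.cast_le.mpr (Nat.lt_succ_iff.mp h3)

lemma wdist_triangle {V : Type*} {G : SimpleGraph V} (τ : Sym2 V → ℕ) {a b : V}
    (h : G.Adj a b) (c : V) :
    wdist G τ a c ≤ (τ s(a, b) : ℕ∞) + wdist G τ b c := by
  by_cases hbc : wdist G τ b c = ⊤
  · simp [hbc]
  · obtain ⟨p, hp⟩ := wdist_attained G τ hbc
    calc wdist G τ a c ≤ (((Walk.cons h p).edges.map τ).sum : ℕ∞) := wdist_le G τ _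
      _ = (τ s(a, b) : ℕ∞) + ((p.edges.map τ).sum : ℕ∞) := by
          simp [Walk.edges_cons]
      _ ≤ _ := by rw [hp]

lemma keyC {V : Type*} {G₁ G₂ : SimpleGraph V} {V₁ V₂ : Set V} {u : V}
    (hV : V₁ ∩ V₂ = {u})
    (hG₁ : ∀ a b : V, G₁.Adj a b → a ∈ V₁ ∧ b ∈ V₁)
    (hG₂ : ∀ a b : V, G₂.Adj a b → a ∈ V₂ ∧ b ∈ V₂)
    (τ : Sym2 V → ℕ)
    {S S₁ S₂ : Set (Sym2 V)} (hS₁ : S₁ ⊆ S) (hS₂ : S₂ ⊆ S)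
    {a t : V} (p : ((G₁ ⊔ G₂).deleteEdges S).Walk a t) :
    t ∈ V₂ → t ≠ u →
    (a ∈ V₁ → wdist (G₁.deleteEdges S₁) τ a u + wdist (G₂.deleteEdges S₂) τ u t
        ≤ ((p.edges.map τ).sum : ℕ∞)) ∧
    (a ∈ V₂ → wdist (G₂.deleteEdges S₂) τ a t ≤ ((p.edges.map τ).sum : ℕ∞)) := by
  induction p with
  | nil =>
    intro hc hcu
    constructor
    · intro h1
      have hmem : _ ∈ V₁ ∩ V₂ := ⟨h1, hc⟩
      rw [hV] at hmem
      exact absurd (Set.mem_singleton_iff.mp hmem) hcu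
    · intro _
      simpa using wdist_self_le (G₂.deleteEdges S₂) τ _
  | @cons a b c h q ih =>
    intro hc hcu
    obtain ⟨ih1, ih2⟩ := ih hc hcu
    obtain ⟨hadj, hns⟩ := deleteEdges_adj.mp h
    have hlen : ((((Walk.cons h q).edges).map τ).sum : ℕ∞)
        = (τ s(a,b) : ℕ∞) + ((q.edges.map τ).sum : ℕ∞) := by
      simp [Walk.edges_cons]
    rw [hlen]
    rcases (sup_adj G₁ G₂ a b).mp hadj with h1 | h2
    · -- edge in G₁
      have ha1 : a ∈ V₁ := (hG₁ a b h1).1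
      have hb1 : b ∈ V₁ := (hG₁ a b h1).2
      have hadj1 : (G₁.deleteEdges S₁).Adj a b :=
        deleteEdges_adj.mpr ⟨h1, fun hmem => hns (hS₁ hmem)⟩
      constructor
      · intro _
        calc wdist (G₁.deleteEdges S₁) τ a u + wdist (G₂.deleteEdges S₂) τ u c
            ≤ ((τ s(a,b) : ℕ∞) + wdist (G₁.deleteEdges S₁) τ b u)
              + wdist (G₂.deleteEdges S₂) τ u c :=
              add_le_add (wdist_triangle τ hadj1 u) le_rfl
          _ = (τ s(a,b) : ℕ∞) + (wdist (G₁.deleteEdges S₁) τ b u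
              + wdist (G₂.deleteEdges S₂) τ u c) := add_assoc _ _ _
          _ ≤ _ := add_le_add le_rfl (ih1 hb1)
      · intro ha2
        have hau : a = u := by
          have hmem : a ∈ V₁ ∩ V₂ := ⟨ha1, ha2⟩
          rw [hV] at hmem
          exact Set.mem_singleton_iff.mp hmem
        subst hau
        calc wdist (G₂.deleteEdges S₂) τ a c
            ≤ wdist (G₁.deleteEdges S₁) τ b a + wdist (G₂.deleteEdges S₂) τ a c :=
              le_add_self
          _ ≤ ((q.edges.map τ).sum : ℕ∞) := ih1 hb1
          _ ≤ _ := le_add_self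
    · -- edge in G₂
      have ha2 : a ∈ V₂ := (hG₂ a b h2).1
      have hb2 : b ∈ V₂ := (hG₂ a b h2).2
      have hadj2 : (G₂.deleteEdges S₂).Adj a b :=
        deleteEdges_adj.mpr ⟨h2, fun hmem => hns (hS₂ hmem)⟩
      have hstep : wdist (G₂.deleteEdges S₂) τ a c
          ≤ (τ s(a,b) : ℕ∞) + ((q.edges.map τ).sum : ℕ∞) :=
        calc wdist (G₂.deleteEdges S₂) τ a c
            ≤ (τ s(a,b) : ℕ∞) + wdist (G₂.deleteEdges S₂) τ b c :=
              wdist_triangle τ hadj2 c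
          _ ≤ _ := add_le_add le_rfl (ih2 hb2)
      constructor
      · intro ha1
        have hau : a = u := by
          have hmem : a ∈ V₁ ∩ V₂ := ⟨ha1, ha2⟩
          rw [hV] at hmem
          exact Set.mem_singleton_iff.mp hmem
        subst hau
        calc wdist (G₁.deleteEdges S₁) τ a a + wdist (G₂.deleteEdges S₂) τ a c
            ≤ 0 + wdist (G₂.deleteEdges S₂) τ a c :=
              add_le_add (wdist_self_le _ _ _) le_rfl
          _ = wdist (G₂.deleteEdges S₂) τ a c := zero_add _
          _ ≤ _ := hstep
      · intro _; exact hstep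

lemma cutCost_set_nonempty {V : Type*} [Fintype V] (G : SimpleGraph V)
    (τ : Sym2 V → ℕ) (a b : V) (hab : a ≠ b) (x : ℕ) :
    {c : ℕ | ∃ S : Finset (Sym2 V), ↑S ⊆ G.edgeSet ∧ S.card = c ∧
      (x : ℕ∞) ≤ wdist (G.deleteEdges ↑S) τ a b}.Nonempty := by
  classical
  have hfin : G.edgeSet.Finite := Set.toFinite _
  refine ⟨hfin.toFinset.card, hfin.toFinset, by rw [Set.Finite.coe_toFinset], rfl, ?_⟩
  have hemp : IsEmpty ((G.deleteEdges (↑hfin.toFinset : Set (Sym2 V))).Walk a b) := by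
    constructor
    intro p
    cases p with
    | nil => exact hab rfl
    | cons h q =>
      obtain ⟨h1, h2⟩ := deleteEdges_adj.mp h
      exact h2 (by simpa using h1)
  rw [wdist]
  simp [iInf_of_empty]

/-- **Serial composition (dynamic program, series case).**
Let `G₁ = (V₁,E₁)` and `G₂ = (V₂,E₂)` be finite simple graphs with positive
integer edge lengths such that `V₁ ∩ V₂ = {u}`, let `s ∈ V₁ \ {u}` and
`t ∈ V₂ \ {u}`, and let `G = G₁ ∪ G₂` be the serial composition at `u`. Then
for every `x ∈ ℕ`:
`c_{s,t}(G,x) = min_{0 ≤ x' ≤ x} ( c_{s,u}(G₁,x') + c_{u,t}(G₂,x−x') )`. -/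
theorem stmt5 {V : Type*} [Fintype V] (G₁ G₂ : SimpleGraph V) (V₁ V₂ : Set V)
    (u s t : V) (hV : V₁ ∩ V₂ = {u})
    (hG₁ : ∀ a b : V, G₁.Adj a b → a ∈ V₁ ∧ b ∈ V₁)
    (hG₂ : ∀ a b : V, G₂.Adj a b → a ∈ V₂ ∧ b ∈ V₂)
    (hs : s ∈ V₁) (hsu : s ≠ u) (ht : t ∈ V₂) (htu : t ≠ u)
    (τ : Sym2 V → ℕ) (hτ : ∀ e ∈ (G₁ ⊔ G₂).edgeSet, 0 < τ e) (x : ℕ) :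
    cutCost (G₁ ⊔ G₂) τ s t x =
      (Finset.range (x + 1)).inf' Finset.nonempty_range_add_one
        (fun x' => cutCost G₁ τ s u x' + cutCost G₂ τ u t (x - x')) := by
  classical
  have hst : s ≠ t := by
    intro h
    apply htu
    have hmem : t ∈ V₁ ∩ V₂ := ⟨h ▸ hs, ht⟩
    rw [hV] at hmem
    exact hmem
  apply le_antisymm
  · -- cutCost G ≤ inf'
    apply Finset.le_inf'
    intro x' hx'
    have hx'le : x' ≤ x := Nat.lt_succ_iff.mp (Finset.mem_range.mp hx')
    obtain ⟨S₁, hS₁sub, hS₁card, hS₁dist⟩ :=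
      Nat.sInf_mem (cutCost_set_nonempty G₁ τ s u hsu x')
    obtain ⟨S₂, hS₂sub, hS₂card, hS₂dist⟩ :=
      Nat.sInf_mem (cutCost_set_nonempty G₂ τ u t (Ne.symm htu) (x - x'))
    have hsub : ↑(S₁ ∪ S₂) ⊆ (G₁ ⊔ G₂).edgeSet := by
      rw [Finset.coe_union]
      apply Set.union_subset
      · exact hS₁sub.trans (edgeSet_mono le_sup_left)
      · exact hS₂sub.trans (edgeSet_mono le_sup_right)
    have hdist : (x : ℕ∞) ≤ wdist ((G₁ ⊔ G₂).deleteEdges ↑(S₁ ∪ S₂)) τ s t := by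
      rw [wdist]
      apply le_iInf
      intro p
      have hkey := (keyC hV hG₁ hG₂ τ
        (S := ↑(S₁ ∪ S₂)) (S₁ := ↑S₁) (S₂ := ↑S₂)
        (by rw [Finset.coe_union]; exact Set.subset_union_left)
        (by rw [Finset.coe_union]; exact Set.subset_union_right)
        p ht htu).1 hs
      have hx : (x : ℕ∞) = (x' : ℕ∞) + ((x - x' : ℕ) : ℕ∞) := by
        rw [← Nat.cast_add, Nat.add_sub_cancel' hx'le]
      rw [hx]
      exact le_trans (add_le_add hS₁dist hS₂dist) hkey
    calc cutCost (G₁ ⊔ G₂) τ s t x ≤ (S₁ ∪ S₂).card :=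
          Nat.sInf_le ⟨S₁ ∪ S₂, hsub, rfl, hdist⟩
      _ ≤ S₁.card + S₂.card := Finset.card_union_le _ _
      _ = cutCost G₁ τ s u x' + cutCost G₂ τ u t (x - x') := by
          rw [hS₁card, hS₂card]; rfl
  · -- inf' ≤ cutCost G
    obtain ⟨S, hSsub, hScard, hSdist⟩ :=
      Nat.sInf_mem (cutCost_set_nonempty (G₁ ⊔ G₂) τ s t hst x)
    set S₁ : Finset (Sym2 V) := S.filter (· ∈ G₁.edgeSet) with hS₁def
    set S₂ : Finset (Sym2 V) := S.filter (· ∈ G₂.edgeSet) with hS₂def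
    have hS₁sub : ↑S₁ ⊆ G₁.edgeSet := by
      intro e he
      simp only [hS₁def, Finset.coe_filter, Set.mem_setOf_eq] at he
      exact he.2
    have hS₂sub : ↑S₂ ⊆ G₂.edgeSet := by
      intro e he
      simp only [hS₂def, Finset.coe_filter, Set.mem_setOf_eq] at he
      exact he.2
    have hdisj : Disjoint S₁ S₂ := by
      rw [Finset.disjoint_left]
      intro e he1 he2
      simp only [hS₁def, Finset.mem_filter] at he1
      simp only [hS₂def, Finset.mem_filter] at he2
      induction e using Sym2.ind with
      | _ a b =>
        have ha1 := (hG₁ a b ((mem_edgeSet G₁).mp he1.2)).1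
        have hb1 := (hG₁ a b ((mem_edgeSet G₁).mp he1.2)).2
        have ha2 := (hG₂ a b ((mem_edgeSet G₂).mp he2.2)).1
        have hb2 := (hG₂ a b ((mem_edgeSet G₂).mp he2.2)).2
        have hau : a = u := by
          have hmem : a ∈ V₁ ∩ V₂ := ⟨ha1, ha2⟩
          rw [hV] at hmem; exact hmem
        have hbu : b = u := by
          have hmem : b ∈ V₁ ∩ V₂ := ⟨hb1, hb2⟩
          rw [hV] at hmem; exact hmem
        exact ((mem_edgeSet G₁).mp he1.2).ne (hau.trans hbu.symm)
    have hcard : S₁.card + S₂.card ≤ S.card := by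
      rw [← Finset.card_union_of_disjoint hdisj]
      apply Finset.card_le_card
      apply Finset.union_subset <;> exact Finset.filter_subset _ _
    -- membership of S₁ edges in the big deleted graph
    have htrans1 : ∀ (pp : (G₁.deleteEdges ↑S₁).Walk s u), ∀ e ∈ pp.edges,
        e ∈ ((G₁ ⊔ G₂).deleteEdges (↑S : Set (Sym2 V))).edgeSet := by
      intro pp e he
      have := pp.edges_subset_edgeSet he
      rw [edgeSet_deleteEdges] at this ⊢
      refine ⟨edgeSet_mono le_sup_left this.1, fun heS => this.2 ?_⟩
      simp only [hS₁def, Finset.coe_filter, Set.mem_setOf_eq]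
      exact ⟨heS, this.1⟩
    have htrans2 : ∀ (pp : (G₂.deleteEdges ↑S₂).Walk u t), ∀ e ∈ pp.edges,
        e ∈ ((G₁ ⊔ G₂).deleteEdges (↑S : Set (Sym2 V))).edgeSet := by
      intro pp e he
      have := pp.edges_subset_edgeSet he
      rw [edgeSet_deleteEdges] at this ⊢
      refine ⟨edgeSet_mono le_sup_right this.1, fun heS => this.2 ?_⟩
      simp only [hS₂def, Finset.coe_filter, Set.mem_setOf_eq]
      exact ⟨heS, this.1⟩
    by_cases h1 : (x : ℕ∞) ≤ wdist (G₁.deleteEdges ↑S₁) τ s u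
    · -- x' = x
      have hc1 : cutCost G₁ τ s u x ≤ S₁.card := Nat.sInf_le ⟨S₁, hS₁sub, rfl, h1⟩
      have hc2 : cutCost G₂ τ u t 0 ≤ S₂.card :=
        Nat.sInf_le ⟨S₂, hS₂sub, rfl, by simp⟩
      calc (Finset.range (x + 1)).inf' Finset.nonempty_range_add_one
            (fun x' => cutCost G₁ τ s u x' + cutCost G₂ τ u t (x - x'))
          ≤ cutCost G₁ τ s u x + cutCost G₂ τ u t (x - x) :=
            Finset.inf'_le _ (Finset.mem_range.mpr (Nat.lt_succ_self x))
        _ = cutCost G₁ τ s u x + cutCost G₂ τ u t 0 := by rw [Nat.sub_self]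
        _ ≤ S₁.card + S₂.card := Nat.add_le_add hc1 hc2
        _ ≤ S.card := hcard
        _ = cutCost (G₁ ⊔ G₂) τ s t x := hScard
    · push_neg at h1
      have hne : wdist (G₁.deleteEdges ↑S₁) τ s u ≠ ⊤ := h1.ne_top
      set d : ℕ := (wdist (G₁.deleteEdges ↑S₁) τ s u).toNat with hddef
      have hd : (d : ℕ∞) = wdist (G₁.deleteEdges ↑S₁) τ s u := ENat.coe_toNat hne
      have hdx : d < x := by
        rw [← hd] at h1; exact_mod_cast h1
      obtain ⟨p₁, hp₁⟩ := wdist_attained _ τ hne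
      have h2 : ((x - d : ℕ) : ℕ∞) ≤ wdist (G₂.deleteEdges ↑S₂) τ u t := by
        rw [wdist]
        apply le_iInf
        intro p₂
        have hq := le_trans hSdist
          (wdist_le _ τ ((p₁.transfer _ (htrans1 p₁)).append (p₂.transfer _ (htrans2 p₂))))
        rw [Walk.edges_append, Walk.edges_transfer, Walk.edges_transfer, List.map_append,
          List.sum_append, Nat.cast_add, hp₁, ← hd] at hq
        rw [ENat.coe_sub]
        exact tsub_le_iff_left.mpr hq
      have hc1 : cutCost G₁ τ s u d ≤ S₁.card :=
        Nat.sInf_le ⟨S₁, hS₁sub, rfl, hd.le⟩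
      have hc2 : cutCost G₂ τ u t (x - d) ≤ S₂.card :=
        Nat.sInf_le ⟨S₂, hS₂sub, rfl, h2⟩
      calc (Finset.range (x + 1)).inf' Finset.nonempty_range_add_one
            (fun x' => cutCost G₁ τ s u x' + cutCost G₂ τ u t (x - x'))
          ≤ cutCost G₁ τ s u d + cutCost G₂ τ u t (x - d) :=
            Finset.inf'_le _ (Finset.mem_range.mpr (hdx.trans (Nat.lt_succ_self x)))
        _ ≤ S₁.card + S₂.card := Nat.add_le_add hc1 hc2
        _ ≤ S.card := hcard
        _ = cutCost (G₁ ⊔ G₂) τ s t x := hScard
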